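/- For all natural numbers n and k, the coefficient of x^k in Q_n(x) equals the coefficient of t^n in the formal power series ((1+bt)^2 / (1+(2b+c)t+b(b+c)t^2)) · (t/(1+(2b+c)t+b(b+c)t^2))^k over ℝ. (That is, the coefficient array of the orthogonal polynomials Q_n is the Riordan array ((1+bt)^2/(1+(2b+c)t+b(b+c)t^2), t/(1+(2b+c)t+b(b+c)t^2)).) -/

import Mathlib

open PowerSeries

noncomputable def Dps (b c : ℝ) : PowerSeries ℝ :=
  1 + PowerSeries.C (R := ℝ) (2 * b + c) * PowerSeries.X
    + PowerSeries.C (R := ℝ) (b * (b + c)) * PowerSeries.X ^ 2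

noncomputable def Fps (b c : ℝ) (k : ℕ) : PowerSeries ℝ :=
  (1 + PowerSeries.C (R := ℝ) b * PowerSeries.X) ^ 2 * (Dps b c)⁻¹ * (PowerSeries.X * (Dps b c)⁻¹) ^ k

lemma constCoeff_Dps (b c : ℝ) : PowerSeries.constantCoeff (R := ℝ) (Dps b c) = 1 := by
  simp [Dps]

lemma Fps_mul_D (b c : ℝ) (k : ℕ) :
    Fps b c k * Dps b c =
      (if k = 0 then (1 + PowerSeries.C (R := ℝ) b * PowerSeries.X) ^ 2
       else PowerSeries.X * Fps b c (k - 1)) := by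
  have hinv : (Dps b c)⁻¹ * Dps b c = 1 := by
    rw [mul_comm]
    exact PowerSeries.mul_inv_cancel _ (by rw [constCoeff_Dps]; norm_num)
  cases k with
  | zero =>
    simp only [Fps, pow_zero, mul_one, if_pos rfl, mul_assoc, hinv]
    simp
  | succ j =>
    have h1 : Fps b c (j + 1) = Fps b c j * (PowerSeries.X * (Dps b c)⁻¹) := by
      rw [Fps, Fps, pow_succ]; ring
    rw [h1, if_neg (Nat.succ_ne_zero j), Nat.add_sub_cancel]
    linear_combination (Fps b c j * PowerSeries.X) * hinv

lemma Fps_eq (b c : ℝ) (k : ℕ) :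
    Fps b c k =
      (if k = 0 then (1 + PowerSeries.C (R := ℝ) b * PowerSeries.X) ^ 2
       else PowerSeries.X * Fps b c (k - 1))
      - PowerSeries.C (R := ℝ) (2 * b + c) * (PowerSeries.X * Fps b c k)
      - PowerSeries.C (R := ℝ) (b * (b + c)) * (PowerSeries.X * (PowerSeries.X * Fps b c k)) := by
  have h := Fps_mul_D b c k
  rw [Dps] at h
  linear_combination h

lemma coeff_N (b : ℝ) (n : ℕ) :
    PowerSeries.coeff (R := ℝ) n ((1 + PowerSeries.C (R := ℝ) b * PowerSeries.X) ^ 2) =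
      if n = 0 then 1 else if n = 1 then 2 * b else if n = 2 then b ^ 2 else 0 := by
  have hN : (1 + PowerSeries.C (R := ℝ) b * PowerSeries.X) ^ 2 =
      1 + PowerSeries.C (R := ℝ) (2 * b) * PowerSeries.X
        + PowerSeries.C (R := ℝ) (b ^ 2) * PowerSeries.X ^ 2 := by
    simp only [map_mul, map_pow, map_ofNat]
    ring
  rw [hN]
  simp only [map_add, PowerSeries.coeff_one, PowerSeries.coeff_C_mul,
    PowerSeries.coeff_X, PowerSeries.coeff_X_pow]
  split_ifs <;> simp_all <;> ring

lemma coeff0_Fps (b c : ℝ) (k : ℕ) :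
    PowerSeries.coeff (R := ℝ) 0 (Fps b c k) = if k = 0 then 1 else 0 := by
  conv_lhs => rw [Fps_eq]
  rw [map_sub, map_sub]
  have hz : ∀ f : PowerSeries ℝ, PowerSeries.coeff (R := ℝ) 0 (PowerSeries.X * f) = 0 := by
    intro f
    simpa using PowerSeries.coeff_zero_eq_constantCoeff_apply (PowerSeries.X * f) ▸
      (by simp : PowerSeries.constantCoeff (R := ℝ) (PowerSeries.X * f) = 0)
  split_ifs with h
  · simp [coeff_N, hz]
  · simp [hz]

lemma hzX : ∀ f : PowerSeries ℝ, PowerSeries.coeff (R := ℝ) 0 (PowerSeries.X * f) = 0 := by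
  intro f
  rw [PowerSeries.coeff_zero_eq_constantCoeff_apply]
  simp

lemma coeff1_Fps (b c : ℝ) (k : ℕ) :
    PowerSeries.coeff (R := ℝ) 1 (Fps b c k) =
      if k = 0 then -c else if k = 1 then 1 else 0 := by
  conv_lhs => rw [Fps_eq]
  rw [map_sub, map_sub, PowerSeries.coeff_C_mul, PowerSeries.coeff_C_mul,
    PowerSeries.coeff_succ_X_mul, PowerSeries.coeff_succ_X_mul,
    hzX, coeff0_Fps]
  match k with
  | 0 => simp only [if_true]; rw [coeff_N]; norm_num
  | 1 => simp [coeff0_Fps]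
  | (j+2) => simp [coeff0_Fps]

lemma coeff2_Fps_rec (b c : ℝ) (k n : ℕ) :
    PowerSeries.coeff (R := ℝ) (n + 2) (Fps b c k) =
      (if k = 0 then PowerSeries.coeff (R := ℝ) (n + 2) ((1 + PowerSeries.C (R := ℝ) b * PowerSeries.X) ^ 2)
       else PowerSeries.coeff (R := ℝ) (n + 1) (Fps b c (k - 1)))
      - (2 * b + c) * PowerSeries.coeff (R := ℝ) (n + 1) (Fps b c k)
      - b * (b + c) * PowerSeries.coeff (R := ℝ) n (Fps b c k) := by
  conv_lhs => rw [Fps_eq]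
  rw [map_sub, map_sub, PowerSeries.coeff_C_mul, PowerSeries.coeff_C_mul,
    show n + 2 = (n + 1) + 1 from rfl, PowerSeries.coeff_succ_X_mul,
    PowerSeries.coeff_succ_X_mul, PowerSeries.coeff_succ_X_mul,
    apply_ite (PowerSeries.coeff (R := ℝ) (n + 1 + 1))]
  split_ifs with h
  · rfl
  · rw [PowerSeries.coeff_succ_X_mul]

lemma constCoeff_Fps (b c : ℝ) (k : ℕ) :
    PowerSeries.constantCoeff (R := ℝ) (Fps b c k) = if k = 0 then 1 else 0 := by
  rw [← PowerSeries.coeff_zero_eq_constantCoeff_apply, coeff0_Fps]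




/-- The coefficient array of the orthogonal polynomials `Q_n` is the Riordan
array `((1+bt)²/(1+(2b+c)t+b(b+c)t²), t/(1+(2b+c)t+b(b+c)t²))`. -/
theorem orth_coeff_array_riordan
    (b c : ℝ) (hb : b ≠ 0) (hc : c ≠ 0)
    (Q : ℕ → Polynomial ℝ)
    (hQ0 : Q 0 = 1)
    (hQ1 : Q 1 = Polynomial.X - Polynomial.C c)
    (hQ2 : Q 2 = Polynomial.X ^ 2 - Polynomial.C (2 * (b + c)) * Polynomial.X
                   + Polynomial.C (c * (b + c)))
    (hQ : ∀ n, 3 ≤ n →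
      Q n = (Polynomial.X - Polynomial.C (2 * b + c)) * Q (n - 1)
            - Polynomial.C (b * (b + c)) * Q (n - 2))
    (n k : ℕ) :
    (Q n).coeff k =
      PowerSeries.coeff (R := ℝ) n
        ((1 + PowerSeries.C (R := ℝ) b * PowerSeries.X) ^ 2 *
          (1 + PowerSeries.C (R := ℝ) (2 * b + c) * PowerSeries.X
             + PowerSeries.C (R := ℝ) (b * (b + c)) * PowerSeries.X ^ 2)⁻¹ *
          (PowerSeries.X *
            (1 + PowerSeries.C (R := ℝ) (2 * b + c) * PowerSeries.X
               + PowerSeries.C (R := ℝ) (b * (b + c)) * PowerSeries.X ^ 2)⁻¹) ^ k) := by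
  show (Q n).coeff k = PowerSeries.coeff (R := ℝ) n (Fps b c k)
  induction n using Nat.strong_induction_on generalizing k with
  | _ n ih =>
    match n, ih with
    | 0, _ =>
      rw [hQ0, PowerSeries.coeff_zero_eq_constantCoeff_apply]
      have : PowerSeries.constantCoeff (R := ℝ) (Fps b c k) = PowerSeries.coeff (R := ℝ) 0 (Fps b c k) := by
        rw [PowerSeries.coeff_zero_eq_constantCoeff_apply]
      rw [this, coeff0_Fps, Polynomial.coeff_one]
    | 1, _ =>
      rw [hQ1, coeff1_Fps]
      match k with
      | 0 => simp
      | 1 => simp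
      | (j+2) => simp [Polynomial.coeff_X]; try ring
    | 2, _ =>
      have h2 := coeff2_Fps_rec b c k 0
      norm_num at h2
      rw [hQ2, h2]
      simp only [coeff1_Fps, coeff0_Fps, constCoeff_Fps, coeff_N]
      match k with
      | 0 => simp; try ring
      | 1 => simp [Polynomial.coeff_X]; try ring
      | 2 => simp [Polynomial.coeff_X_pow, Polynomial.coeff_C]; try ring
      | (j+3) => simp [Polynomial.coeff_X_pow, Polynomial.coeff_C, Polynomial.coeff_X]; try ring
    | (m+3), ih =>
      rw [hQ (m+3) (by omega)]
      have e1 : m + 3 - 1 = m + 2 := rfl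
      have e2 : m + 3 - 2 = m + 1 := rfl
      rw [e1, e2, show (m+3 : ℕ) = (m+1)+2 from rfl, coeff2_Fps_rec,
        ← ih (m+2) (by omega) k, ← ih (m+1) (by omega) k,
        sub_mul, Polynomial.coeff_sub, Polynomial.coeff_sub, Polynomial.coeff_C_mul,
        Polynomial.coeff_C_mul]
      cases k with
      | zero =>
        rw [if_pos rfl, coeff_N, if_neg (by omega), if_neg (by omega), if_neg (by omega)]
        simp [Polynomial.mul_coeff_zero]
        try ring
      | succ j =>
        rw [if_neg (Nat.succ_ne_zero j), Nat.succ_sub_one, Polynomial.coeff_X_mul,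
          ← ih (m+2) (by omega) j]
        try ring
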